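/- arXiv:1103.2209 — 5 statements merged into one kernel-verified Lean document; each statement's English description precedes it below -/
import Mathlib

section
/- Let y ∈ ℝⁿ with y[i] ≥ 0 for all i, H : ℝⁿ → ℝⁿ and Φ : ℝᴸ → ℝⁿ linear, γ > 0, and Ψ : ℝᴸ → ℝ nonnegative and coercive (Ψ(α) → +∞ as ‖α‖ → +∞). Then J(α) = f₁(HΦα) + γΨ(α) + ι_C(Φα) is coercive: for every M ∈ ℝ there exists R > 0 such that ‖α‖ > R implies J(α) > M. -/
/-- Scalar Poisson negative log-likelihood `f_pois(y,·) : ℝ → (-∞,+∞]`. -/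
noncomputable def fpois (y t : ℝ) : EReal :=
  if 0 < y then (if 0 < t then ((-y * Real.log t + t : ℝ) : EReal) else ⊤)
  else (if 0 ≤ t then ((t : ℝ) : EReal) else ⊤)

/-- Poisson data-fidelity term `f₁(η) = Σᵢ f_pois(y[i], η[i])`. -/
noncomputable def f1 {n : ℕ} (y : Fin n → ℝ) (η : EuclideanSpace ℝ (Fin n)) : EReal :=
  ∑ i, fpois (y i) (η i)

/-- Indicator function of a set, `0` on the set, `+∞` off it. -/
noncomputable def indC {E : Type*} (C : Set E) (w : E) : EReal :=
  open Classical in if w ∈ C then 0 else ⊤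

/-- The objective `J(α) = f₁(HΦα) + γΨ(α) + ι_C(Φα)`, `C` the nonnegative orthant. -/
noncomputable def J {n L : ℕ} (y : Fin n → ℝ)
    (H : EuclideanSpace ℝ (Fin n) →ₗ[ℝ] EuclideanSpace ℝ (Fin n))
    (Φ : EuclideanSpace ℝ (Fin L) →ₗ[ℝ] EuclideanSpace ℝ (Fin n)) (γ : ℝ)
    (Ψ : EuclideanSpace ℝ (Fin L) → ℝ) (α : EuclideanSpace ℝ (Fin L)) : EReal :=
  f1 y (H (Φ α)) + ((γ * Ψ α : ℝ) : EReal)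
    + indC {x : EuclideanSpace ℝ (Fin n) | ∀ i, 0 ≤ x i} (Φ α)


lemma fpois_lb (y t : ℝ) (hy : 0 ≤ y) :
    ((y - y * Real.log y : ℝ) : EReal) ≤ fpois y t := by
  unfold fpois
  rcases lt_or_eq_of_le hy with hy' | hy'
  · rw [if_pos hy']
    by_cases ht : 0 < t
    · rw [if_pos ht, EReal.coe_le_coe_iff]
      have hlog : Real.log (t / y) ≤ t / y - 1 :=
        Real.log_le_sub_one_of_pos (by positivity)
      rw [Real.log_div (ne_of_gt ht) (ne_of_gt hy')] at hlog
      have h2 : y * (Real.log t - Real.log y) ≤ y * (t / y - 1) :=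
        mul_le_mul_of_nonneg_left hlog hy
      have h3 : y * (t / y) = t := by field_simp
      nlinarith
    · rw [if_neg ht]; exact le_top
  · rw [if_neg (by simp [← hy'])]
    by_cases ht : 0 ≤ t
    · rw [if_pos ht, EReal.coe_le_coe_iff, ← hy']; simpa using ht
    · rw [if_neg ht]; exact le_top

lemma indC_nonneg {E : Type*} (C : Set E) (w : E) : 0 ≤ indC C w := by
  unfold indC; split <;> simp

lemma f1_lb {n : ℕ} (y : Fin n → ℝ) (hy : ∀ i, 0 ≤ y i) (η : EuclideanSpace ℝ (Fin n)) :
    ((∑ i, (y i - y i * Real.log (y i)) : ℝ) : EReal) ≤ f1 y η := by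
  unfold f1
  have : ((∑ i, (y i - y i * Real.log (y i)) : ℝ) : EReal)
      = ∑ i, (((y i - y i * Real.log (y i)) : ℝ) : EReal) := by
    induction (Finset.univ : Finset (Fin n)) using Finset.induction with
    | empty => simp
    | insert _ _ h ih => rw [Finset.sum_insert h, Finset.sum_insert h, EReal.coe_add, ih]
  rw [this]
  exact Finset.sum_le_sum fun i _ => fpois_lb (y i) (η i) (hy i)

/-- If `Ψ` is nonnegative and coercive, then `J` is coercive: for every `M` there is
`R > 0` such that `‖α‖ > R` implies `J(α) > M`. -/
theorem J_coercive (n L : ℕ) (y : Fin n → ℝ) (hy : ∀ i, 0 ≤ y i)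
    (H : EuclideanSpace ℝ (Fin n) →ₗ[ℝ] EuclideanSpace ℝ (Fin n))
    (Φ : EuclideanSpace ℝ (Fin L) →ₗ[ℝ] EuclideanSpace ℝ (Fin n))
    (γ : ℝ) (hγ : 0 < γ) (Ψ : EuclideanSpace ℝ (Fin L) → ℝ)
    (hΨnn : ∀ α, 0 ≤ Ψ α)
    (hΨcoercive : ∀ M : ℝ, ∃ R : ℝ, ∀ α : EuclideanSpace ℝ (Fin L), R < ‖α‖ → M < Ψ α) :
    ∀ M : ℝ, ∃ R : ℝ, 0 < R ∧
      ∀ α : EuclideanSpace ℝ (Fin L), R < ‖α‖ → (M : EReal) < J y H Φ γ Ψ α := by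
  intro M
  set c : ℝ := ∑ i, (y i - y i * Real.log (y i)) with hc
  obtain ⟨R₀, hR₀⟩ := hΨcoercive ((M - c) / γ)
  refine ⟨max R₀ 1, lt_of_lt_of_le one_pos (le_max_right _ _), fun α hα => ?_⟩
  have hΨ : (M - c) / γ < Ψ α := hR₀ α (lt_of_le_of_lt (le_max_left _ _) hα)
  have hM : M < c + γ * Ψ α := by
    have := (div_lt_iff₀ hγ).mp hΨ
    nlinarith
  have h1 : ((c : ℝ) : EReal) + ((γ * Ψ α : ℝ) : EReal) + 0 ≤ J y H Φ γ Ψ α := by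
    unfold J
    gcongr
    · exact f1_lb y hy _
    · exact indC_nonneg _ _
  calc (M : EReal) < ((c + γ * Ψ α : ℝ) : EReal) := EReal.coe_lt_coe_iff.mpr hM
    _ = ((c : ℝ) : EReal) + ((γ * Ψ α : ℝ) : EReal) + 0 := by
        rw [add_zero, ← EReal.coe_add]
    _ ≤ _ := h1
end

section
/- Let y ≥ 0, β > 0 and x ∈ ℝ. The unique minimizer over t ∈ ℝ of the function t ↦ β·f_pois(y,t) + (t - x)²/2 (valued in (-∞,+∞]) is t* = (x - β + √((x - β)² + 4βy))/2. -/
lemma key_pos' (y β x T t : ℝ) (hT : 0 < T) (ht : 0 < t)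
    (hquad : T^2 + (β - x)*T = β*y) (hpos : 0 ≤ T + β - x) :
    β*(-y*Real.log T + T) + (T-x)^2/2 + (t-T)^2/2
      ≤ β*(-y*Real.log t + t) + (t-x)^2/2 := by
  have hlog : Real.log t - Real.log T ≤ t/T - 1 := by
    rw [← Real.log_div ht.ne' hT.ne']
    exact Real.log_le_sub_one_of_pos (div_pos ht hT)
  have h2 : T * (t/T - 1) = t - T := by field_simp
  have hlog' : T * (Real.log t - Real.log T) ≤ t - T := by
    calc T * (Real.log t - Real.log T) ≤ T * (t/T - 1) :=
          mul_le_mul_of_nonneg_left hlog hT.le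
      _ = t - T := h2
  have e : β*y = (T + β - x) * T := by linear_combination -hquad
  have hkey : β*y*(Real.log t - Real.log T) ≤ (T + β - x)*(t - T) := by
    rw [e, mul_assoc]
    exact mul_le_mul_of_nonneg_left hlog' hpos
  nlinarith [hkey]

lemma key_zero' (β x T t : ℝ) (hquad : T^2 + (β - x)*T = 0) (hpos : 0 ≤ T + β - x)
    (ht : 0 ≤ t) :
    β*T + (T-x)^2/2 + (t-T)^2/2 ≤ β*t + (t-x)^2/2 := by
  nlinarith [mul_nonneg ht hpos, hquad]

/-- Proximity operator of `β·f_pois(y,·)`: for `y ≥ 0`, `β > 0`, `x ∈ ℝ`, the unique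
minimizer of `t ↦ β·f_pois(y,t) + (t-x)²/2` is `(x - β + √((x-β)² + 4βy))/2`. -/
theorem prox_fpois (y β x : ℝ) (hy : 0 ≤ y) (hβ : 0 < β) :
    ∀ tstar : ℝ, tstar = (x - β + Real.sqrt ((x - β) ^ 2 + 4 * β * y)) / 2 →
      (∀ t : ℝ,
        (β : EReal) * fpois y tstar + (((tstar - x) ^ 2 / 2 : ℝ) : EReal)
          ≤ (β : EReal) * fpois y t + (((t - x) ^ 2 / 2 : ℝ) : EReal)) ∧
      (∀ t : ℝ,
        (∀ s : ℝ,
          (β : EReal) * fpois y t + (((t - x) ^ 2 / 2 : ℝ) : EReal)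
            ≤ (β : EReal) * fpois y s + (((s - x) ^ 2 / 2 : ℝ) : EReal)) →
        t = tstar) := by
  intro T hT
  have hnn : (0:ℝ) ≤ (x - β)^2 + 4*β*y := by positivity
  have hD2 : Real.sqrt ((x - β)^2 + 4*β*y) ^ 2 = (x - β)^2 + 4*β*y := Real.sq_sqrt hnn
  have hDge : |x - β| ≤ Real.sqrt ((x - β)^2 + 4*β*y) := by
    rw [← Real.sqrt_sq_eq_abs]
    exact Real.sqrt_le_sqrt (by nlinarith [mul_nonneg hβ.le hy])
  have hTnn : 0 ≤ T := by
    rw [hT]; have h1 := neg_abs_le (x - β); linarith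
  have hquad : T^2 + (β - x)*T = β*y := by
    have h3 : (2*T - (x - β))^2 = (x - β)^2 + 4*β*y := by
      rw [hT] at *; rw [show 2*((x - β + Real.sqrt ((x - β)^2 + 4*β*y))/2) - (x - β)
        = Real.sqrt ((x - β)^2 + 4*β*y) by ring]
      exact hD2
    nlinarith [h3]
  have hpos : 0 ≤ T + β - x := by
    rw [hT]; have h1 := le_abs_self (x - β); linarith
  have hβE : (0:EReal) < (β:EReal) := by exact_mod_cast hβ
  have htopmul : (β : EReal) * (⊤ : EReal) = ⊤ := EReal.mul_top_of_pos hβE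
  rcases lt_or_eq_of_le hy with hy' | hy'
  · -- y > 0
    have hTpos : 0 < T := by
      have hlt : |x - β| < Real.sqrt ((x - β)^2 + 4*β*y) := by
        rw [← Real.sqrt_sq_eq_abs]
        apply Real.sqrt_lt_sqrt (sq_nonneg _)
        nlinarith [mul_pos hβ hy']
      rw [hT]; have h1 := neg_abs_le (x - β); linarith
    have hfT : fpois y T = ((-y * Real.log T + T : ℝ) : EReal) := by
      simp [fpois, hy', hTpos]
    constructor
    · intro t
      by_cases ht : 0 < t
      · have hft : fpois y t = ((-y * Real.log t + t : ℝ) : EReal) := by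
          simp [fpois, hy', ht]
        rw [hfT, hft, ← EReal.coe_mul, ← EReal.coe_mul, ← EReal.coe_add, ← EReal.coe_add,
          EReal.coe_le_coe_iff]
        have := key_pos' y β x T t hTpos ht hquad hpos
        nlinarith [sq_nonneg (t - T)]
      · have hft : fpois y t = ⊤ := by simp [fpois, hy', ht]
        rw [hft, htopmul, EReal.top_add_coe]
        exact le_top
    · intro t hmin
      have hTfin := hmin T
      by_cases ht : 0 < t
      · have hft : fpois y t = ((-y * Real.log t + t : ℝ) : EReal) := by
          simp [fpois, hy', ht]
        rw [hfT, hft, ← EReal.coe_mul, ← EReal.coe_mul, ← EReal.coe_add, ← EReal.coe_add,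
          EReal.coe_le_coe_iff] at hTfin
        have hge := key_pos' y β x T t hTpos ht hquad hpos
        nlinarith [sq_nonneg (t - T)]
      · exfalso
        have hft : fpois y t = ⊤ := by simp [fpois, hy', ht]
        rw [hft, htopmul, EReal.top_add_coe, hfT, ← EReal.coe_mul, ← EReal.coe_add] at hTfin
        exact (not_le_of_gt (EReal.coe_lt_top _)) hTfin
  · -- y = 0
    subst hy'
    have hquad0 : T^2 + (β - x)*T = 0 := by linarith [hquad]
    have hfT : fpois 0 T = ((T : ℝ) : EReal) := by simp [fpois, hTnn]
    constructor
    · intro t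
      by_cases ht : 0 ≤ t
      · have hft : fpois 0 t = ((t : ℝ) : EReal) := by simp [fpois, ht]
        rw [hfT, hft, ← EReal.coe_mul, ← EReal.coe_mul, ← EReal.coe_add, ← EReal.coe_add,
          EReal.coe_le_coe_iff]
        have := key_zero' β x T t hquad0 hpos ht
        nlinarith [sq_nonneg (t - T)]
      · have hft : fpois 0 t = ⊤ := by simp [fpois, ht]
        rw [hft, htopmul, EReal.top_add_coe]
        exact le_top
    · intro t hmin
      have hTfin := hmin T
      by_cases ht : 0 ≤ t
      · have hft : fpois 0 t = ((t : ℝ) : EReal) := by simp [fpois, ht]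
        rw [hfT, hft, ← EReal.coe_mul, ← EReal.coe_mul, ← EReal.coe_add, ← EReal.coe_add,
          EReal.coe_le_coe_iff] at hTfin
        have hge := key_zero' β x T t hquad0 hpos ht
        nlinarith [sq_nonneg (t - T)]
      · exfalso
        have hft : fpois 0 t = ⊤ := by simp [fpois, ht]
        rw [hft, htopmul, EReal.top_add_coe, hfT, ← EReal.coe_mul, ← EReal.coe_add] at hTfin
        exact (not_le_of_gt (EReal.coe_lt_top _)) hTfin
end

section
/- Let y ∈ ℝⁿ with y[i] ≥ 0 for all i, β > 0, and x ∈ ℝⁿ. The unique minimizer over η ∈ ℝⁿ of η ↦ β·f₁(η) + ‖x - η‖²/2 (valued in (-∞,+∞]) is given coordinatewise by η*[i] = (x[i] - β + √((x[i] - β)² + 4β·y[i]))/2 for each i. -/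
noncomputable def tstar (y β x : ℝ) : ℝ := (x - β + Real.sqrt ((x - β) ^ 2 + 4 * β * y)) / 2

lemma tstar_sq {y β x : ℝ} (hy : 0 ≤ y) (hβ : 0 < β) :
    (tstar y β x) ^ 2 + (β - x) * tstar y β x - β * y = 0 := by
  have harg : (0:ℝ) ≤ (x - β) ^ 2 + 4 * β * y := by positivity
  have hs2 : Real.sqrt ((x - β) ^ 2 + 4 * β * y) ^ 2 = (x - β) ^ 2 + 4 * β * y :=
    Real.sq_sqrt harg
  unfold tstar
  linear_combination hs2 / 4

lemma tstar_nonneg {y β x : ℝ} (hy : 0 ≤ y) (hβ : 0 < β) : 0 ≤ tstar y β x := by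
  have harg : (0:ℝ) ≤ (x - β) ^ 2 + 4 * β * y := by positivity
  have hs2 : Real.sqrt ((x - β) ^ 2 + 4 * β * y) ^ 2 = (x - β) ^ 2 + 4 * β * y :=
    Real.sq_sqrt harg
  have hs0 : 0 ≤ Real.sqrt ((x - β) ^ 2 + 4 * β * y) := Real.sqrt_nonneg _
  unfold tstar
  nlinarith [hs2, hs0, sq_nonneg (Real.sqrt ((x - β) ^ 2 + 4 * β * y) + (x - β))]

lemma tstar_pos {y β x : ℝ} (hy : 0 < y) (hβ : 0 < β) : 0 < tstar y β x := by
  have harg : (0:ℝ) ≤ (x - β) ^ 2 + 4 * β * y := by positivity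
  have hs2 : Real.sqrt ((x - β) ^ 2 + 4 * β * y) ^ 2 = (x - β) ^ 2 + 4 * β * y :=
    Real.sq_sqrt harg
  have hs0 : 0 ≤ Real.sqrt ((x - β) ^ 2 + 4 * β * y) := Real.sqrt_nonneg _
  unfold tstar
  nlinarith [hs2, hs0, sq_nonneg (Real.sqrt ((x - β) ^ 2 + 4 * β * y) + (x - β))]

noncomputable def fpR (y t : ℝ) : ℝ := if 0 < y then -y * Real.log t + t else t

lemma scalar_lt (y β x : ℝ) (hy : 0 ≤ y) (hβ : 0 < β) (t : ℝ)
    (hdom : if 0 < y then 0 < t else 0 ≤ t) (hne : t ≠ tstar y β x) :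
    β * fpR y (tstar y β x) + (x - tstar y β x) ^ 2 / 2
      < β * fpR y t + (x - t) ^ 2 / 2 := by
  set p := tstar y β x with hp
  rcases lt_or_eq_of_le hy with hy0 | hy0
  · -- y > 0
    have hpp : 0 < p := tstar_pos hy0 hβ
    have ht : 0 < t := by simpa [hy0] using hdom
    have hquad := tstar_sq (x := x) hy hβ
    have hfy : fpR y t = -y * Real.log t + t := by simp [fpR, hy0]
    have hfp : fpR y p = -y * Real.log p + p := by simp [fpR, hy0]
    rw [hfy, hfp]
    have hne1 : t / p ≠ 1 := by
      intro h
      exact hne (by field_simp at h; linarith)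
    have hlog : Real.log (t / p) < t / p - 1 :=
      Real.log_lt_sub_one_of_pos (div_pos ht hpp) hne1
    rw [Real.log_div (ne_of_gt ht) (ne_of_gt hpp)] at hlog
    have h2 : (Real.log t - Real.log p) * p < t - p := by
      calc (Real.log t - Real.log p) * p
          < (t / p - 1) * p := (mul_lt_mul_iff_of_pos_right hpp).mpr hlog
        _ = t - p := by field_simp
    have h3 : β * y * (Real.log t - Real.log p) < (p + β - x) * (t - p) := by
      rw [← mul_lt_mul_iff_of_pos_right hpp]
      have hby : β * y = p * (p + β - x) := by linarith [hquad]; 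
      calc β * y * (Real.log t - Real.log p) * p
          = p * (p + β - x) * ((Real.log t - Real.log p) * p) - (p + β - x) * p * ((Real.log t - Real.log p) * p) + β * y * ((Real.log t - Real.log p) * p) := by ring
        _ = β * y * ((Real.log t - Real.log p) * p) := by rw [hby]; ring
        _ < β * y * (t - p) := by
            have hby0 : 0 < β * y := mul_pos hβ hy0
            exact (mul_lt_mul_iff_of_pos_left hby0).mpr h2
        _ = (p + β - x) * (t - p) * p := by rw [hby]; ring
    nlinarith [h3, sq_nonneg (t - p)]
  · -- y = 0
    have hy' : ¬ (0 < y) := by rw [← hy0]; exact lt_irrefl 0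
    have ht : 0 ≤ t := by simpa [hy'] using hdom
    have hfy : fpR y t = t := by simp [fpR, hy']
    have hfp : fpR y p = p := by simp [fpR, hy']
    have habs : p = (x - β + |x - β|) / 2 := by
      rw [hp]; unfold tstar
      rw [← hy0]
      rw [show (x - β) ^ 2 + 4 * β * 0 = (x - β)^2 by ring, Real.sqrt_sq_eq_abs]
    rw [hfy, hfp]
    rcases abs_cases (x - β) with ⟨h1, h2⟩ | ⟨h1, h2⟩
    · have hpe : p = x - β := by rw [habs, h1]; ring
      rw [hpe] at hne ⊢
      nlinarith [sq_pos_of_ne_zero (sub_ne_zero.mpr hne)]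
    · have hpe : p = 0 := by rw [habs, h1]; ring
      rw [hpe] at hne ⊢
      have ht' : 0 < t := lt_of_le_of_ne ht (Ne.symm hne)
      nlinarith [ht', h2, hβ]


lemma scalar_le (y β x : ℝ) (hy : 0 ≤ y) (hβ : 0 < β) (t : ℝ)
    (hdom : if 0 < y then 0 < t else 0 ≤ t) :
    β * fpR y (tstar y β x) + (x - tstar y β x) ^ 2 / 2
      ≤ β * fpR y t + (x - t) ^ 2 / 2 := by
  rcases eq_or_ne t (tstar y β x) with h | h
  · rw [h]
  · exact (scalar_lt y β x hy hβ t hdom h).le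

lemma tstar_dom (y β x : ℝ) (hy : 0 ≤ y) (hβ : 0 < β) :
    if 0 < y then 0 < tstar y β x else 0 ≤ tstar y β x := by
  split_ifs with h
  · exact tstar_pos h hβ
  · exact tstar_nonneg hy hβ

lemma fpois_of_dom (y t : ℝ) (h : if 0 < y then 0 < t else 0 ≤ t) :
    fpois y t = ((fpR y t : ℝ) : EReal) := by
  unfold fpois fpR
  by_cases h1 : 0 < y
  · rw [if_pos h1] at h ⊢; rw [if_pos h1, if_pos h]
  · rw [if_neg h1] at h ⊢; rw [if_neg h1, if_pos h]

lemma fpois_of_not_dom (y t : ℝ) (h : ¬ (if 0 < y then 0 < t else 0 ≤ t)) :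
    fpois y t = ⊤ := by
  unfold fpois
  by_cases h1 : 0 < y
  · rw [if_pos h1] at h; rw [if_pos h1, if_neg h]
  · rw [if_neg h1] at h; rw [if_neg h1, if_neg h]

lemma fpois_ne_bot (y t : ℝ) : fpois y t ≠ ⊥ := by
  unfold fpois
  split_ifs <;> first | exact EReal.coe_ne_bot _ | exact bot_lt_top.ne' 

lemma sum_ne_bot {ι : Type*} (s : Finset ι) (f : ι → EReal) (h : ∀ i ∈ s, f i ≠ ⊥) :
    ∑ i ∈ s, f i ≠ ⊥ := by
  classical
  induction s using Finset.induction_on with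
  | empty => simp
  | @insert a s' hni ih =>
    rw [Finset.sum_insert hni]
    rw [Ne, EReal.add_eq_bot_iff]
    push_neg
    exact ⟨h a (Finset.mem_insert_self a s'), ih fun i hi => h i (Finset.mem_insert_of_mem hi)⟩

lemma sum_eq_top {n : ℕ} (f : Fin n → EReal) (hb : ∀ i, f i ≠ ⊥) (j : Fin n) (hj : f j = ⊤) :
    ∑ i, f i = ⊤ := by
  classical
  rw [← Finset.add_sum_erase _ f (Finset.mem_univ j), hj]
  exact EReal.top_add_of_ne_bot (sum_ne_bot _ _ fun i _ => hb i)

lemma coe_fsum {ι : Type*} (s : Finset ι) (f : ι → ℝ) :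
    ((∑ i ∈ s, f i : ℝ) : EReal) = ∑ i ∈ s, ((f i : ℝ) : EReal) := by
  classical
  induction s using Finset.induction_on with
  | empty => simp
  | @insert a s' hni ih =>
    rw [Finset.sum_insert hni, Finset.sum_insert hni, EReal.coe_add, ih]

lemma norm_sq_eq {n : ℕ} (v : EuclideanSpace ℝ (Fin n)) :
    ‖v‖ ^ 2 = ∑ i, v i ^ 2 := by
  rw [EuclideanSpace.norm_eq]
  rw [Real.sq_sqrt (by positivity)]
  congr 1
  ext i
  rw [Real.norm_eq_abs, sq_abs]

lemma obj_of_dom {n : ℕ} (y : Fin n → ℝ) (β : ℝ) (hβ : 0 < β)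
    (x η : EuclideanSpace ℝ (Fin n)) (hd : ∀ i, if 0 < y i then 0 < η i else 0 ≤ η i) :
    (β : EReal) * f1 y η + ((‖x - η‖ ^ 2 / 2 : ℝ) : EReal)
      = ((∑ i, (β * fpR (y i) (η i) + (x i - η i) ^ 2 / 2) : ℝ) : EReal) := by
  have hf1 : f1 y η = ((∑ i, fpR (y i) (η i) : ℝ) : EReal) := by
    unfold f1
    rw [coe_fsum]
    exact Finset.sum_congr rfl fun i _ => fpois_of_dom _ _ (hd i)
  have hnorm : ‖x - η‖ ^ 2 = ∑ i, (x i - η i) ^ 2 := by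
    rw [norm_sq_eq]
    exact Finset.sum_congr rfl fun i _ => rfl
  rw [hf1, hnorm, ← EReal.coe_mul, ← EReal.coe_add]
  congr 1
  rw [Finset.mul_sum, Finset.sum_div, ← Finset.sum_add_distrib]

lemma obj_of_not_dom {n : ℕ} (y : Fin n → ℝ) (β : ℝ) (hβ : 0 < β)
    (x η : EuclideanSpace ℝ (Fin n)) (j : Fin n)
    (hj : ¬ (if 0 < y j then 0 < η j else 0 ≤ η j)) :
    (β : EReal) * f1 y η + ((‖x - η‖ ^ 2 / 2 : ℝ) : EReal) = ⊤ := by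
  have hf1 : f1 y η = ⊤ :=
    sum_eq_top _ (fun i => fpois_ne_bot _ _) j (fpois_of_not_dom _ _ hj)
  rw [hf1, EReal.mul_top_of_pos (by exact_mod_cast hβ), EReal.top_add_coe]

/-- Proximity operator of `β·f₁`: the unique minimizer of `η ↦ β·f₁(η) + ‖x - η‖²/2`
is given coordinatewise by `η*[i] = (x[i] - β + √((x[i]-β)² + 4β·y[i]))/2`. -/
theorem prox_f1 (n : ℕ) (y : Fin n → ℝ) (hy : ∀ i, 0 ≤ y i) (β : ℝ) (hβ : 0 < β)
    (x : EuclideanSpace ℝ (Fin n)) :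
    ∀ ηstar : EuclideanSpace ℝ (Fin n),
      (∀ i, ηstar i = (x i - β + Real.sqrt ((x i - β) ^ 2 + 4 * β * y i)) / 2) →
      (∀ η : EuclideanSpace ℝ (Fin n),
        (β : EReal) * f1 y ηstar + ((‖x - ηstar‖ ^ 2 / 2 : ℝ) : EReal)
          ≤ (β : EReal) * f1 y η + ((‖x - η‖ ^ 2 / 2 : ℝ) : EReal)) ∧
      (∀ η : EuclideanSpace ℝ (Fin n),
        (∀ ξ : EuclideanSpace ℝ (Fin n),
          (β : EReal) * f1 y η + ((‖x - η‖ ^ 2 / 2 : ℝ) : EReal)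
            ≤ (β : EReal) * f1 y ξ + ((‖x - ξ‖ ^ 2 / 2 : ℝ) : EReal)) →
        η = ηstar) := by
  intro ηstar hstar
  have hstar' : ∀ i, ηstar i = tstar (y i) β (x i) := fun i => hstar i
  have hηdom : ∀ i, if 0 < y i then 0 < ηstar i else 0 ≤ ηstar i := by
    intro i
    rw [hstar' i]
    exact tstar_dom (y i) β (x i) (hy i) hβ
  constructor
  · intro η
    by_cases hd : ∀ i, if 0 < y i then 0 < η i else 0 ≤ η i
    · rw [obj_of_dom y β hβ x ηstar hηdom, obj_of_dom y β hβ x η hd,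
        EReal.coe_le_coe_iff]
      apply Finset.sum_le_sum
      intro i _
      rw [hstar' i]
      exact scalar_le (y i) β (x i) (hy i) hβ (η i) (hd i)
    · push_neg at hd
      obtain ⟨j, hj⟩ := hd
      rw [obj_of_not_dom y β hβ x η j hj]
      exact le_top
  · intro η hmin
    have h1 := hmin ηstar
    have hd : ∀ i, if 0 < y i then 0 < η i else 0 ≤ η i := by
      by_contra hc
      push_neg at hc
      obtain ⟨j, hj⟩ := hc
      rw [obj_of_not_dom y β hβ x η j hj, obj_of_dom y β hβ x ηstar hηdom] at h1
      exact (EReal.coe_lt_top _).not_ge h1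
    rw [obj_of_dom y β hβ x η hd, obj_of_dom y β hβ x ηstar hηdom,
      EReal.coe_le_coe_iff] at h1
    ext i
    by_contra hne
    have hlt : ∑ k, (β * fpR (y k) (ηstar k) + (x k - ηstar k) ^ 2 / 2)
        < ∑ k, (β * fpR (y k) (η k) + (x k - η k) ^ 2 / 2) := by
      apply Finset.sum_lt_sum
      · intro k _
        rw [hstar' k]
        exact scalar_le (y k) β (x k) (hy k) hβ (η k) (hd k)
      · refine ⟨i, Finset.mem_univ i, ?_⟩
        rw [hstar' i]
        exact scalar_lt (y i) β (x i) (hy i) hβ (η i) (hd i)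
          (by rw [← hstar' i]; exact hne)
    exact absurd h1 hlt.not_ge
end

section
/- Let ψ : ℝ → ℝ be convex, even (ψ(-t) = ψ(t)), nonnegative, nondecreasing on [0,+∞), with ψ(0) = 0, continuous on ℝ, twice differentiable on ℝ \ {0}, and with positive right derivative at zero ψ'₊(0) = lim_{h→0⁺} ψ(h)/h > 0. Let δ > 0 and β ∈ ℝ. Then the unique minimizer α̂ of t ↦ δψ(t) + (t - β)²/2 equals 0 if (and only if) |β| ≤ δ·ψ'₊(0). -/
/-- Threshold behaviour of the proximity operator (Fadili–Starck): under the stated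
assumptions on `ψ` and with right derivative `d = ψ'₊(0) > 0` at zero, the unique
minimizer `α̂` of `t ↦ δψ(t) + (t - β)²/2` equals `0` if and only if `|β| ≤ δ·d`. -/
theorem prox_threshold_zero (ψ : ℝ → ℝ)
    (hconv : ConvexOn ℝ Set.univ ψ)
    (heven : ∀ t, ψ (-t) = ψ t)
    (hnonneg : ∀ t, 0 ≤ ψ t)
    (hmono : MonotoneOn ψ (Set.Ici (0 : ℝ)))
    (hzero : ψ 0 = 0)
    (hcont : Continuous ψ)
    (hdiff : ∀ t : ℝ, t ≠ 0 → DifferentiableAt ℝ ψ t ∧ DifferentiableAt ℝ (deriv ψ) t)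
    (d : ℝ) (hd : 0 < d)
    (hright : Filter.Tendsto (fun h : ℝ => ψ h / h) (nhdsWithin 0 (Set.Ioi 0)) (nhds d))
    (δ : ℝ) (hδ : 0 < δ) (β : ℝ) :
    ∃ a : ℝ, (∀ t : ℝ, δ * ψ a + (a - β) ^ 2 / 2 ≤ δ * ψ t + (t - β) ^ 2 / 2) ∧
      (∀ b : ℝ, (∀ t : ℝ, δ * ψ b + (b - β) ^ 2 / 2 ≤ δ * ψ t + (t - β) ^ 2 / 2) → b = a) ∧
      (a = 0 ↔ |β| ≤ δ * d) := by
  set F : ℝ → ℝ := fun t => δ * ψ t + (t - β) ^ 2 / 2 with hFdef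
  -- slope lemma
  have hslope : ∀ t : ℝ, 0 < t → d * t ≤ ψ t := by
    intro t ht
    have key : ∀ᶠ h in nhdsWithin (0:ℝ) (Set.Ioi 0), ψ h / h ≤ ψ t / t := by
      filter_upwards [Ioo_mem_nhdsGT ht] with h hh
      obtain ⟨hh0, hht⟩ := hh
      have hcv := hconv.2 (Set.mem_univ t) (Set.mem_univ (0:ℝ))
        (show (0:ℝ) ≤ h / t by positivity)
        (show (0:ℝ) ≤ 1 - h / t by
          have : h / t ≤ 1 := (div_le_one ht).2 hht.le
          linarith) (show h / t + (1 - h / t) = 1 by ring)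
      rw [smul_eq_mul, smul_eq_mul, smul_eq_mul, smul_eq_mul, hzero] at hcv
      have harg : h / t * t + (1 - h / t) * 0 = h := by field_simp; ring
      rw [harg] at hcv
      have h1 : ψ h ≤ h / t * ψ t := by linarith
      rw [div_le_div_iff₀ hh0 ht]
      have h2 := mul_le_mul_of_nonneg_right h1 ht.le
      have ht' : (t:ℝ) ≠ 0 := ne_of_gt ht
      field_simp at h2
      linarith
    have hle := le_of_tendsto hright key
    rw [le_div_iff₀ ht] at hle
    linarith
  have hpsi_abs : ∀ t : ℝ, d * |t| ≤ ψ t := by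
    intro t
    rcases lt_trichotomy t 0 with h | h | h
    · have := hslope (-t) (by linarith)
      rw [heven t] at this
      rw [abs_of_neg h]
      linarith
    · simp [h, hzero]
    · rw [abs_of_pos h]; exact hslope t h
  -- uniqueness of minimizers
  have huniq : ∀ a b : ℝ, (∀ t, F a ≤ F t) → (∀ t, F b ≤ F t) → b = a := by
    intro a b ha hb
    by_contra hne
    have hmid : ψ ((1/2) * a + (1/2) * b) ≤ (1/2) * ψ a + (1/2) * ψ b := by
      have hcv := hconv.2 (Set.mem_univ a) (Set.mem_univ b)
        (show (0:ℝ) ≤ 1/2 by norm_num) (show (0:ℝ) ≤ 1/2 by norm_num)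
        (show (1:ℝ)/2 + 1/2 = 1 by norm_num)
      simpa [smul_eq_mul] using hcv
    have hab : F a = F b := le_antisymm (ha b) (hb a)
    have h1 : F a ≤ F ((1/2) * a + (1/2) * b) := ha _
    have h2 : F ((1/2) * a + (1/2) * b) =
        δ * ψ ((1/2) * a + (1/2) * b) + ((1/2) * a + (1/2) * b - β) ^ 2 / 2 := rfl
    have hFa : F a = δ * ψ a + (a - β) ^ 2 / 2 := rfl
    have hFb : F b = δ * ψ b + (b - β) ^ 2 / 2 := rfl
    have hquad : ((1/2) * a + (1/2) * b - β) ^ 2 < ((a - β) ^ 2 + (b - β) ^ 2) / 2 := by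
      have hne' : a - b ≠ 0 := sub_ne_zero.2 fun h => hne h.symm
      have : (0:ℝ) < (a - b) ^ 2 :=
        lt_of_le_of_ne (sq_nonneg _) (Ne.symm (pow_ne_zero 2 hne'))
      nlinarith [this]
    have hmid' : δ * ψ ((1/2) * a + (1/2) * b) ≤ δ * ((1/2) * ψ a + (1/2) * ψ b) :=
      mul_le_mul_of_nonneg_left hmid hδ.le
    rw [h2] at h1
    rw [hFb] at hab
    rw [hFa] at h1
    nlinarith [h1, hmid', hquad, hab]
  by_cases hβ : |β| ≤ δ * d
  · -- a = 0
    refine ⟨0, ?_, ?_, by simp [hβ]⟩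
    · intro t
      show δ * ψ 0 + (0 - β) ^ 2 / 2 ≤ δ * ψ t + (t - β) ^ 2 / 2
      have h1 := hpsi_abs t
      have h2 : t * β ≤ |t| * |β| := by
        calc t * β ≤ |t * β| := le_abs_self _
          _ = |t| * |β| := abs_mul t β
      have h3 : |t| * |β| ≤ |t| * (δ * d) := mul_le_mul_of_nonneg_left hβ (abs_nonneg t)
      have h4 : δ * (d * |t|) ≤ δ * ψ t := mul_le_mul_of_nonneg_left h1 hδ.le
      have h5 : (0:ℝ) ≤ t ^ 2 / 2 := by positivity
      rw [hzero]
      nlinarith [sq_abs t]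
    · intro b hb
      exact huniq 0 b (fun t => by
        have h1 := hpsi_abs t
        have h2 : t * β ≤ |t| * |β| := by
          calc t * β ≤ |t * β| := le_abs_self _
            _ = |t| * |β| := abs_mul t β
        have h3 : |t| * |β| ≤ |t| * (δ * d) := mul_le_mul_of_nonneg_left hβ (abs_nonneg t)
        have h4 : δ * (d * |t|) ≤ δ * ψ t := mul_le_mul_of_nonneg_left h1 hδ.le
        show δ * ψ 0 + (0 - β) ^ 2 / 2 ≤ δ * ψ t + (t - β) ^ 2 / 2
        rw [hzero]
        nlinarith [sq_abs t]) hb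
  · -- |β| > δd : minimizer exists on a compact interval, nonzero
    push_neg at hβ
    have hβ0 : β ≠ 0 := by
      intro h; rw [h] at hβ; simp at hβ; nlinarith
    -- F 0 is not the min: find s with F s < F 0
    have hFs : ∃ s : ℝ, F s < F 0 := by
      have htend : Filter.Tendsto (fun h : ℝ => δ * (ψ h / h) + h / 2)
          (nhdsWithin 0 (Set.Ioi 0)) (nhds (δ * d + 0 / 2)) := by
        exact (hright.const_mul δ).add
          ((continuous_id.div_const 2).tendsto 0 |>.mono_left nhdsWithin_le_nhds)
      have hlt : δ * d + 0 / 2 < |β| := by norm_num; exact hβ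
      have hev : ∀ᶠ h in nhdsWithin (0:ℝ) (Set.Ioi 0),
          δ * (ψ h / h) + h / 2 < |β| := htend.eventually (eventually_lt_nhds hlt) -- maybe wrong name
      obtain ⟨t, hlt', ht0⟩ := (hev.and eventually_mem_nhdsWithin).exists
      have ht0' : (0:ℝ) < t := ht0
      have htne : (t:ℝ) ≠ 0 := ne_of_gt ht0'
      have hmain : δ * ψ t + t ^ 2 / 2 < t * |β| := by
        have h1 := mul_lt_mul_of_pos_left hlt' ht0'
        have h2 : t * (δ * (ψ t / t) + t / 2) = δ * ψ t + t ^ 2 / 2 := by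
          field_simp
        rw [h2] at h1
        exact h1
      refine ⟨if 0 < β then t else -t, ?_⟩
      show δ * ψ _ + (_ - β) ^ 2 / 2 < δ * ψ 0 + (0 - β) ^ 2 / 2
      rw [hzero]
      by_cases hbp : 0 < β
      · simp only [if_pos hbp]
        rw [abs_of_pos hbp] at hmain
        nlinarith
      · simp only [if_neg hbp]
        have hbneg : β < 0 := lt_of_le_of_ne (not_lt.1 hbp) hβ0
        rw [abs_of_neg hbneg] at hmain
        rw [heven t]
        nlinarith
    -- existence of a global minimizer
    have hFcont : Continuous F :=
      (continuous_const.mul hcont).add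
        (((continuous_id.sub continuous_const).pow 2).div_const 2)
    set R : ℝ := Real.sqrt (2 * δ * ψ β) + 1 with hRdef
    have hsq : Real.sqrt (2 * δ * ψ β) ^ 2 = 2 * δ * ψ β :=
      Real.sq_sqrt (by nlinarith [hnonneg β, hδ.le])
    have hR0 : 0 < R := by
      have := Real.sqrt_nonneg (2 * δ * ψ β); linarith
    have hRbig : 2 * δ * ψ β < R ^ 2 := by
      have h0 := Real.sqrt_nonneg (2 * δ * ψ β)
      nlinarith [hsq]
    clear_value R
    have hne : (Set.Icc (β - R) (β + R)).Nonempty := ⟨β, by constructor <;> linarith⟩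
    obtain ⟨a, haI, hamin⟩ := isCompact_Icc.exists_isMinOn hne hFcont.continuousOn
    have haglob : ∀ t, F a ≤ F t := by
      intro t
      by_cases htI : t ∈ Set.Icc (β - R) (β + R)
      · exact hamin htI
      · have hFaβ : F a ≤ F β := hamin ⟨by linarith, by linarith⟩
        have hout : R < |t - β| := by
          rw [Set.mem_Icc, not_and_or] at htI
          rcases htI with h | h
          · push_neg at h
            rw [abs_of_neg (by linarith : t - β < 0)]; linarith
          · push_neg at h
            rw [abs_of_pos (by linarith : 0 < t - β)]; linarith
        have h2 : R ^ 2 < (t - β) ^ 2 := by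
          nlinarith [abs_nonneg (t - β), sq_abs (t - β)]
        have hFt : F β < F t := by
          show δ * ψ β + (β - β) ^ 2 / 2 < δ * ψ t + (t - β) ^ 2 / 2
          have hψt : (0:ℝ) ≤ δ * ψ t := mul_nonneg hδ.le (hnonneg t)
          have hzr : (β - β) ^ 2 = 0 := by ring
          rw [hzr]
          linarith
        linarith
    have hane : a ≠ 0 := by
      intro h
      obtain ⟨s, hs⟩ := hFs
      have := haglob s
      rw [h] at this
      linarith
    exact ⟨a, haglob, fun b hb => huniq a b haglob hb, by
      constructor
      · intro h; exact absurd h hane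
      · intro h; exact absurd h (not_le.2 hβ)⟩
end

section
/- Let ψ : ℝ → ℝ be convex, even, nonnegative, nondecreasing on [0,+∞), with ψ(0) = 0, continuous on ℝ, twice differentiable on ℝ \ {0}, and with positive right derivative at zero ψ'₊(0) = lim_{h→0⁺} ψ(h)/h > 0. Let δ > 0 and β ∈ ℝ with |β| > δ·ψ'₊(0). Then the unique minimizer α̂ of t ↦ δψ(t) + (t - β)²/2 is nonzero, has the same sign as β, and satisfies α̂ = β - δ·ψ'(α̂). -/
open Filter Set

private lemma quad_coercive (β : ℝ) :
    Tendsto (fun t : ℝ => (t - β) ^ 2 / 2) (cocompact ℝ) atTop := by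
  have h1 : Tendsto (fun t : ℝ => |t|) (cocompact ℝ) atTop := by
    exact tendsto_norm_cocompact_atTop (E := ℝ)
  have h3 : Tendsto (fun x : ℝ => x - |β|) atTop atTop :=
    (tendsto_atTop_add_const_right _ (-|β|) tendsto_id).congr
      (fun x => (sub_eq_add_neg x _).symm)
  have h4 : Tendsto (fun x : ℝ => (x - |β|) ^ 2) atTop atTop :=
    (tendsto_pow_atTop (two_ne_zero)).comp h3
  have h5 := h4.atTop_div_const (show (0:ℝ) < 2 by norm_num)
  have h6 := h5.comp h1
  refine tendsto_atTop_mono (fun t => ?_) h6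
  have h7 : t * β ≤ |t| * |β| := by
    calc t * β ≤ |t * β| := le_abs_self _
    _ = |t| * |β| := abs_mul t β
  simp only [Function.comp]
  nlinarith [h7, sq_abs t, sq_abs β]

private lemma prox_aux (ψ : ℝ → ℝ)
    (hconv : ConvexOn ℝ Set.univ ψ)
    (heven : ∀ t, ψ (-t) = ψ t)
    (hnonneg : ∀ t, 0 ≤ ψ t)
    (hzero : ψ 0 = 0)
    (hcont : Continuous ψ)
    (hdiff : ∀ t : ℝ, t ≠ 0 → DifferentiableAt ℝ ψ t ∧ DifferentiableAt ℝ (deriv ψ) t)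
    (d : ℝ)
    (hright : Tendsto (fun h : ℝ => ψ h / h) (nhdsWithin 0 (Set.Ioi 0)) (nhds d))
    (δ : ℝ) (hδ : 0 < δ) (β : ℝ) (hβpos : 0 < β) (hβ : δ * d < β) :
    ∃ a : ℝ, (∀ t : ℝ, δ * ψ a + (a - β) ^ 2 / 2 ≤ δ * ψ t + (t - β) ^ 2 / 2) ∧
      (∀ b : ℝ, (∀ t : ℝ, δ * ψ b + (b - β) ^ 2 / 2 ≤ δ * ψ t + (t - β) ^ 2 / 2) → b = a) ∧
      a ≠ 0 ∧ 0 < a * β ∧ a = β - δ * deriv ψ a := by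
  set F : ℝ → ℝ := fun t => δ * ψ t + (t - β) ^ 2 / 2 with hFdef
  have hFcont : Continuous F :=
    (continuous_const.mul hcont).add
      (((continuous_id.sub continuous_const).pow 2).div_const 2)
  have hco : Tendsto F (cocompact ℝ) atTop := by
    refine tendsto_atTop_mono (fun t => ?_) (quad_coercive β)
    have := hnonneg t
    simp only [F]
    nlinarith
  obtain ⟨a, ha⟩ := hFcont.exists_forall_le hco
  -- a > 0
  have hapos : 0 < a := by
    rcases lt_trichotomy a 0 with h | h | h
    · exfalso
      have hkey := ha (-a)
      have hev := heven a
      simp only [F] at hkey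
      nlinarith
    · exfalso
      subst h
      have hlim : Tendsto (fun h : ℝ => δ * ψ h / h + h / 2)
          (nhdsWithin 0 (Ioi 0)) (nhds (δ * d)) := by
        have h1 := hright.const_mul δ
        have h2 : Tendsto (fun h : ℝ => h / 2) (nhdsWithin 0 (Ioi 0)) (nhds 0) := by
          have := (continuous_id.div_const 2).tendsto (0 : ℝ)
          simpa using this.mono_left nhdsWithin_le_nhds
        have := h1.add h2
        simp only [add_zero] at this
        refine this.congr fun x => by ring
      have hge : β ≤ δ * d := by
        refine ge_of_tendsto hlim ?_
        filter_upwards [self_mem_nhdsWithin] with t ht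
        have ht0 : (0:ℝ) < t := ht
        have hkey := ha t
        simp only [F, hzero] at hkey
        have h2 : (β - t / 2) * t ≤ δ * ψ t := by nlinarith
        have h3 : β - t / 2 ≤ δ * ψ t / t := (le_div_iff₀ ht0).mpr h2
        linarith
      linarith
    · exact h
  have hne : a ≠ 0 := ne_of_gt hapos
  -- uniqueness
  have huniq : ∀ b : ℝ, (∀ t : ℝ, F b ≤ F t) → b = a := by
    intro b hb
    by_contra hba
    have hab : F a = F b := le_antisymm (ha b) (hb a)
    have hmid : ψ ((a + b) / 2) ≤ (ψ a + ψ b) / 2 := by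
      have := hconv.2 (mem_univ a) (mem_univ b)
        (by norm_num : (0:ℝ) ≤ 1/2) (by norm_num : (0:ℝ) ≤ 1/2) (by norm_num)
      simp only [smul_eq_mul] at this
      rw [show (1/2 : ℝ) * a + (1/2 : ℝ) * b = (a + b) / 2 by ring] at this
      linarith
    have hm := ha ((a + b) / 2)
    have hsub : a - b ≠ 0 := sub_ne_zero.mpr fun h => hba h.symm
    have hsq : 0 < (a - b) ^ 2 := by positivity
    simp only [F] at hm hab
    nlinarith [mul_le_mul_of_nonneg_left hmid (le_of_lt hδ)]
  -- stationarity
  have hloc : IsLocalMin F a := Filter.Eventually.of_forall ha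
  have hd1 : HasDerivAt F (δ * deriv ψ a + (a - β)) a := by
    have h1 : HasDerivAt ψ (deriv ψ a) a := ((hdiff a hne).1).hasDerivAt
    have h2 := h1.const_mul δ
    have h3 : HasDerivAt (fun t : ℝ => (t - β) ^ 2 / 2) (a - β) a := by
      have h4 := (((hasDerivAt_id a).sub_const β).pow 2).div_const 2
      simpa using h4
    exact h2.add h3
  have hz : δ * deriv ψ a + (a - β) = 0 := by
    have := hloc.deriv_eq_zero
    rwa [hd1.deriv] at this
  exact ⟨a, ha, huniq, hne, mul_pos hapos hβpos, by linarith⟩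

private lemma deriv_odd_of_even (ψ : ℝ → ℝ) (heven : ∀ t, ψ (-t) = ψ t)
    (hdiff : ∀ t : ℝ, t ≠ 0 → DifferentiableAt ℝ ψ t ∧ DifferentiableAt ℝ (deriv ψ) t)
    (x : ℝ) (hx : x ≠ 0) : deriv ψ (-x) = - deriv ψ x := by
  have h1 : HasDerivAt ψ (deriv ψ (-x)) (-x) :=
    ((hdiff (-x) (neg_ne_zero.mpr hx)).1).hasDerivAt
  have h2 : HasDerivAt (fun t : ℝ => ψ (-t)) (deriv ψ (-x) * (-1)) x :=
    HasDerivAt.comp x h1 (hasDerivAt_neg x)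
  have h3 : HasDerivAt ψ (-(deriv ψ (-x))) x := by
    have he : (fun t : ℝ => ψ (-t)) = ψ := funext heven
    rw [he] at h2
    simpa using h2
  have := h3.deriv
  linarith

/-- Above the threshold (Fadili–Starck): if `|β| > δ·ψ'₊(0)`, the unique minimizer `α̂`
of `t ↦ δψ(t) + (t - β)²/2` is nonzero, has the same sign as `β`, and satisfies the
implicit equation `α̂ = β - δ·ψ'(α̂)`. -/
theorem prox_above_threshold (ψ : ℝ → ℝ)
    (hconv : ConvexOn ℝ Set.univ ψ)
    (heven : ∀ t, ψ (-t) = ψ t)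
    (hnonneg : ∀ t, 0 ≤ ψ t)
    (hmono : MonotoneOn ψ (Set.Ici (0 : ℝ)))
    (hzero : ψ 0 = 0)
    (hcont : Continuous ψ)
    (hdiff : ∀ t : ℝ, t ≠ 0 → DifferentiableAt ℝ ψ t ∧ DifferentiableAt ℝ (deriv ψ) t)
    (d : ℝ) (hd : 0 < d)
    (hright : Filter.Tendsto (fun h : ℝ => ψ h / h) (nhdsWithin 0 (Set.Ioi 0)) (nhds d))
    (δ : ℝ) (hδ : 0 < δ) (β : ℝ) (hβ : δ * d < |β|) :
    ∃ a : ℝ, (∀ t : ℝ, δ * ψ a + (a - β) ^ 2 / 2 ≤ δ * ψ t + (t - β) ^ 2 / 2) ∧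
      (∀ b : ℝ, (∀ t : ℝ, δ * ψ b + (b - β) ^ 2 / 2 ≤ δ * ψ t + (t - β) ^ 2 / 2) → b = a) ∧
      a ≠ 0 ∧ 0 < a * β ∧ a = β - δ * deriv ψ a := by
  have hβne : β ≠ 0 := by
    intro h
    rw [h, abs_zero] at hβ
    nlinarith
  rcases hβne.lt_or_gt with hβneg | hβpos
  · -- β < 0 : reflect
    have hβ' : δ * d < -β := by rwa [abs_of_neg hβneg] at hβ
    obtain ⟨a', hmin', huniq', hne', hsign', heq'⟩ :=
      prox_aux ψ hconv heven hnonneg hzero hcont hdiff d hright δ hδ (-β)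
        (by linarith) hβ'
    have hid : ∀ t : ℝ, δ * ψ (-t) + (-t - β) ^ 2 / 2 = δ * ψ t + (t - -β) ^ 2 / 2 := by
      intro t; rw [heven]; ring_nf
    refine ⟨-a', ?_, ?_, neg_ne_zero.mpr hne', by nlinarith, ?_⟩
    · intro t
      have h1 := hmin' (-t)
      have h2 := hid a'
      have h3 := hid (-t)
      simp only [neg_neg] at h3
      linarith
    · intro b hb
      have hb' : ∀ t : ℝ, δ * ψ (-b) + (-b - -β) ^ 2 / 2 ≤ δ * ψ t + (t - -β) ^ 2 / 2 := by
        intro t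
        have h1 := hb (-t)
        have h2 := hid b
        have h3 := hid t
        have h4 : δ * ψ (-b) + (-b - -β) ^ 2 / 2 = δ * ψ b + (b - β) ^ 2 / 2 := by
          rw [heven]; ring_nf
        linarith
      have := huniq' (-b) hb'
      linarith [this]
    · have hodd := deriv_odd_of_even ψ heven hdiff a' hne'
      rw [hodd]
      linarith
  · -- β > 0
    have hβ' : δ * d < β := by rwa [abs_of_pos hβpos] at hβ
    exact prox_aux ψ hconv heven hnonneg hzero hcont hdiff d hright δ hδ β hβpos hβ'
end
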